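/- For every real ℓ with ℓ < n₀, writing k = n₀ − ℓ, one has ρ_ℓ = ε·√(n₁/(n₁ + k)) + i·√(k/(n₁ + k)) and ρ̂_ℓ = √(m₁/(m₁ + k)) + i·√(k/(m₁ + k)), where ε = +1 if μ² ≥ m − n and ε = −1 if μ² ≤ m − n. In particular |ρ_ℓ| = |ρ̂_ℓ| = 1. -/

import Mathlib

lemma abs_aux_rho (a : ℝ) (ha : a ^ 2 ≤ 1) :
    ‖(a : ℂ) + Complex.I * ((Real.sqrt (1 - a ^ 2) : ℝ) : ℂ)‖ = 1 := by
  have hb : Real.sqrt (1 - a ^ 2) ^ 2 = 1 - a ^ 2 := Real.sq_sqrt (by linarith)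
  have hn : Complex.normSq ((a : ℂ) + Complex.I * ((Real.sqrt (1 - a ^ 2) : ℝ) : ℂ)) = 1 := by
    simp only [Complex.normSq_apply, Complex.add_re, Complex.add_im, Complex.mul_re,
      Complex.mul_im, Complex.I_re, Complex.I_im, Complex.ofReal_re, Complex.ofReal_im]
    nlinarith [hb]
  rw [Complex.norm_def, hn, Real.sqrt_one]



set_option maxHeartbeats 1000000 in
/-- With `n₀ + 1/2 = (2(m+n)μ² - (m-n)² - μ⁴)/(4μ²)`,
`n₁ = (m - n - μ²)²/(4μ²)`, `m₁ = m - n + n₁`, and `ρ_ℓ`, `ρ̂_ℓ` as defined,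
for every real `ℓ < n₀`, writing `k = n₀ - ℓ`, one has
`ρ_ℓ = ε √(n₁/(n₁+k)) + i √(k/(n₁+k))` (with `ε = +1` if `μ² ≥ m - n`,
`ε = -1` if `μ² ≤ m - n`) and `ρ̂_ℓ = √(m₁/(m₁+k)) + i √(k/(m₁+k))`;
in particular `|ρ_ℓ| = |ρ̂_ℓ| = 1`. -/
theorem rho_formula
    (m n μ : ℝ) (hmn : n ≤ m) (hn : 0 < n) (hμ : 0 < μ)
    (h1 : (Real.sqrt m - Real.sqrt n) ^ 2 ≤ μ ^ 2)
    (h2 : μ ^ 2 ≤ (Real.sqrt m + Real.sqrt n) ^ 2)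
    (n₀ n₁ m₁ : ℝ)
    (hn₀ : n₀ + 1 / 2 = (2 * (m + n) * μ ^ 2 - (m - n) ^ 2 - μ ^ 4) / (4 * μ ^ 2))
    (hn₁ : n₁ = (m - n - μ ^ 2) ^ 2 / (4 * μ ^ 2))
    (hm₁ : m₁ = m - n + n₁)
    (ℓ : ℝ) (hℓ : ℓ < n₀) (k : ℝ) (hk : k = n₀ - ℓ)
    (s p : ℝ) (hs : s = Real.sqrt (n - ℓ - 1 / 2)) (hp : p = Real.sqrt (m - ℓ - 1 / 2))
    (ρ ρhat : ℂ)
    (hρ : ρ = (((μ ^ 2 - m + n) / (2 * μ * s) : ℝ) : ℂ)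
        + Complex.I * ((Real.sqrt (1 - (μ ^ 2 - m + n) ^ 2 / (4 * μ ^ 2 * s ^ 2)) : ℝ) : ℂ))
    (hρhat : ρhat = (((μ ^ 2 + m - n) / (2 * μ * p) : ℝ) : ℂ)
        + Complex.I * ((Real.sqrt (1 - (μ ^ 2 + m - n) ^ 2 / (4 * μ ^ 2 * p ^ 2)) : ℝ) : ℂ)) :
    (m - n ≤ μ ^ 2 →
      ρ = ((Real.sqrt (n₁ / (n₁ + k)) : ℝ) : ℂ)
          + Complex.I * ((Real.sqrt (k / (n₁ + k)) : ℝ) : ℂ)) ∧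
    (μ ^ 2 ≤ m - n →
      ρ = ((-Real.sqrt (n₁ / (n₁ + k)) : ℝ) : ℂ)
          + Complex.I * ((Real.sqrt (k / (n₁ + k)) : ℝ) : ℂ)) ∧
    ρhat = ((Real.sqrt (m₁ / (m₁ + k)) : ℝ) : ℂ)
          + Complex.I * ((Real.sqrt (k / (m₁ + k)) : ℝ) : ℂ) ∧
    ‖ρ‖ = 1 ∧ ‖ρhat‖ = 1 := by
  have hμ2 : (0:ℝ) < μ^2 := by positivity
  have hn₁0 : 0 ≤ n₁ := by rw [hn₁]; positivity
  have hk0 : 0 < k := by rw [hk]; linarith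
  have hA : 0 < n₁ + k := by linarith
  have key : n - (n₀ + 1/2) = n₁ := by
    rw [hn₀, hn₁]; field_simp; ring
  have hs2 : n - ℓ - 1/2 = n₁ + k := by rw [hk]; linarith
  have hm₁0 : 0 ≤ m₁ := by rw [hm₁]; linarith
  have hB : 0 < m₁ + k := by linarith
  have hp2 : m - ℓ - 1/2 = m₁ + k := by rw [hm₁]; linarith
  have hsval : s = Real.sqrt (n₁ + k) := by rw [hs, hs2]
  have hpval : p = Real.sqrt (m₁ + k) := by rw [hp, hp2]
  have hs_sq : s^2 = n₁ + k := by rw [hsval]; exact Real.sq_sqrt hA.le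
  have hp_sq : p^2 = m₁ + k := by rw [hpval]; exact Real.sq_sqrt hB.le
  have hs_pos : 0 < s := by rw [hsval]; exact Real.sqrt_pos.mpr hA
  have hp_pos : 0 < p := by rw [hpval]; exact Real.sqrt_pos.mpr hB
  have hsqn₁ : Real.sqrt n₁ = |μ^2 - m + n| / (2*μ) := by
    have h' : n₁ = ((μ^2 - m + n)/(2*μ))^2 := by rw [hn₁]; field_simp; ring
    rw [h', Real.sqrt_sq_eq_abs, abs_div, abs_of_pos (by positivity : (0:ℝ) < 2*μ)]
  have hμm : 0 ≤ μ^2 + m - n := by linarith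
  have hsqm₁ : Real.sqrt m₁ = (μ^2 + m - n) / (2*μ) := by
    have h' : m₁ = ((μ^2 + m - n)/(2*μ))^2 := by rw [hm₁, hn₁]; field_simp; ring
    rw [h', Real.sqrt_sq_eq_abs, abs_div, abs_of_nonneg hμm,
      abs_of_pos (by positivity : (0:ℝ) < 2*μ)]
  have hsq : (μ^2 - m + n)^2 = 4*μ^2*n₁ := by rw [hn₁]; field_simp; ring
  have hsqhat : (μ^2 + m - n)^2 = 4*μ^2*m₁ := by rw [hm₁, hn₁]; field_simp; ring
  have him : 1 - (μ^2 - m + n)^2/(4*μ^2*s^2) = k/(n₁+k) := by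
    rw [hsq, hs_sq]; field_simp; ring
  have himhat : 1 - (μ^2 + m - n)^2/(4*μ^2*p^2) = k/(m₁+k) := by
    rw [hsqhat, hp_sq]; field_simp; ring
  have hrehat : (μ^2 + m - n)/(2*μ*p) = Real.sqrt (m₁/(m₁+k)) := by
    rw [Real.sqrt_div hm₁0, ← hpval, hsqm₁]
    field_simp
  refine ⟨?_, ?_, ?_, ?_, ?_⟩
  · intro h
    have hre : (μ^2 - m + n)/(2*μ*s) = Real.sqrt (n₁/(n₁+k)) := by
      rw [Real.sqrt_div hn₁0, ← hsval, hsqn₁, abs_of_nonneg (by linarith)]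
      field_simp
    rw [hρ, hre, him]
  · intro h
    have hre : (μ^2 - m + n)/(2*μ*s) = -Real.sqrt (n₁/(n₁+k)) := by
      rw [Real.sqrt_div hn₁0, ← hsval, hsqn₁, abs_of_nonpos (by linarith)]
      field_simp
    rw [hρ, hre, him]
  · rw [hρhat, hrehat, himhat]
  · have ha2 : (μ^2 - m + n)^2/(4*μ^2*s^2) = ((μ^2 - m + n)/(2*μ*s))^2 := by ring
    have := abs_aux_rho ((μ^2 - m + n)/(2*μ*s))
      (by rw [← ha2]; linarith [div_nonneg hk0.le hA.le, him])
    rw [← ha2] at this; rw [hρ]; exact this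
  · have ha2 : (μ^2 + m - n)^2/(4*μ^2*p^2) = ((μ^2 + m - n)/(2*μ*p))^2 := by ring
    have := abs_aux_rho ((μ^2 + m - n)/(2*μ*p))
      (by rw [← ha2]; linarith [div_nonneg hk0.le hB.le, himhat])
    rw [← ha2] at this; rw [hρhat]; exact this
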